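/- arXiv:2405.16308 — 2 statements merged into one kernel-verified Lean document; each statement's English description precedes it below -/
import Mathlib

section
/- Let X be a σ-compact, locally compact Hausdorff space and let μ_n and μ be Radon measures on X (Borel, finite on compact sets, outer regular, and inner regular with respect to compact sets) with μ_n → μ vaguely, i.e. ∫ φ dμ_n → ∫ φ dμ for every continuous φ : X → ℝ with compact support. Let (K_m) be a decreasing sequence of compact subsets of X with μ(∂K_m) = 0 for every m and with intersection E := ⋂_m K_m. Let (n_m) be a strictly increasing sequence of indices such that |μ_{n_m}(K_m) − μ(E)| ≤ 2·|μ(K_m) − μ(E)| for every m. Then the restrictions of μ_{n_m} to K_m converge weak* to the restriction of μ to E: for every continuous φ : X → ℝ with compact support, ∫_{K_m} φ dμ_{n_m} → ∫_E φ dμ as m → ∞. -/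
open MeasureTheory Filter Topology
open scoped ENNReal

/-- Auxiliary estimate: if `g = 1` on a measurable set `S` of finite measure, `g ≥ 0`,
and `|φ| ≤ C`, then the difference between `∫ φ·g` and `∫_S φ` is controlled by
`C · (∫ g − ν S)`. -/
lemma key_estimate {X : Type*} [MeasurableSpace X]
    (ν : Measure X) (S : Set X) (hS : MeasurableSet S)
    (φ g : X → ℝ) (C : ℝ) (hC : ∀ x, |φ x| ≤ C)
    (hg0 : ∀ x, 0 ≤ g x)
    (hint : Integrable (fun x => φ x * g x) ν) (hgint : Integrable g ν)
    (hgS : ∀ x ∈ S, g x = 1) :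
    |(∫ x, φ x * g x ∂ν) - ∫ x in S, φ x ∂ν| ≤ C * ((∫ x, g x ∂ν) - (ν S).toReal) := by
  have h1 : ∫ x in S, φ x ∂ν = ∫ x in S, φ x * g x ∂ν :=
    setIntegral_congr_fun hS (fun x hx => by rw [hgS x hx, mul_one])
  have h2 : (∫ x in S, φ x * g x ∂ν) + (∫ x in Sᶜ, φ x * g x ∂ν) = ∫ x, φ x * g x ∂ν :=
    integral_add_compl hS hint
  have h3 : (∫ x in S, g x ∂ν) + (∫ x in Sᶜ, g x ∂ν) = ∫ x, g x ∂ν :=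
    integral_add_compl hS hgint
  have h4 : ∫ x in S, g x ∂ν = (ν S).toReal := by
    rw [setIntegral_congr_fun hS (fun x hx => hgS x hx)]
    simp; rfl
  have heq : (∫ x, φ x * g x ∂ν) - ∫ x in S, φ x ∂ν = ∫ x in Sᶜ, φ x * g x ∂ν := by
    rw [h1]; linarith
  have h5 : |∫ x in Sᶜ, φ x * g x ∂ν| ≤ ∫ x in Sᶜ, C * g x ∂ν := by
    calc |∫ x in Sᶜ, φ x * g x ∂ν| ≤ ∫ x in Sᶜ, |φ x * g x| ∂ν := by
          simpa only [Real.norm_eq_abs] using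
            norm_integral_le_integral_norm (μ := ν.restrict Sᶜ) (fun x => φ x * g x)
      _ ≤ ∫ x in Sᶜ, C * g x ∂ν := by
          refine integral_mono hint.abs.restrict ((hgint.const_mul C).restrict) fun x => ?_
          rw [abs_mul, abs_of_nonneg (hg0 x)]
          exact mul_le_mul_of_nonneg_right (hC x) (hg0 x)
  have h6 : ∫ x in Sᶜ, C * g x ∂ν = C * ((∫ x, g x ∂ν) - (ν S).toReal) := by
    rw [integral_const_mul]
    congr 1
    linarith
  rw [heq]
  calc |∫ x in Sᶜ, φ x * g x ∂ν| ≤ ∫ x in Sᶜ, C * g x ∂ν := h5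
    _ = C * ((∫ x, g x ∂ν) - (ν S).toReal) := h6

/-- **A step in the proof of Lemma 3.7 (lem8a) of the paper.**  Let `μₙ → μ` vaguely, with
all measures Radon, on a σ-compact locally compact Hausdorff space.  Let `(Kₘ)` be a
decreasing sequence of compact sets with `μ(∂Kₘ) = 0` and intersection `E`, and let `(nₘ)`
be a strictly increasing sequence of indices such that
`|μ_{nₘ}(Kₘ) − μ(E)| ≤ 2·|μ(Kₘ) − μ(E)|` for all `m`.  Then the restrictions of `μ_{nₘ}`
to `Kₘ` converge weak* to the restriction of `μ` to `E`. -/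
theorem vague_convergence_shrinking_restrict
    {X : Type*} [TopologicalSpace X] [T2Space X] [LocallyCompactSpace X]
    [SigmaCompactSpace X] [MeasurableSpace X] [BorelSpace X]
    (μ' : ℕ → Measure X) (μ : Measure X)
    (hfin : ∀ n, IsFiniteMeasureOnCompacts (μ' n))
    (houter : ∀ n, (μ' n).OuterRegular)
    (hinner : ∀ n, (μ' n).InnerRegular)
    (hμfin : IsFiniteMeasureOnCompacts μ)
    (hμouter : μ.OuterRegular)
    (hμinner : μ.InnerRegular)
    (hvague : ∀ φ : X → ℝ, Continuous φ → HasCompactSupport φ →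
      Tendsto (fun n => ∫ x, φ x ∂(μ' n)) atTop (𝓝 (∫ x, φ x ∂μ)))
    (K : ℕ → Set X) (hKcpt : ∀ m, IsCompact (K m)) (hKanti : Antitone K)
    (hKb : ∀ m, μ (frontier (K m)) = 0)
    (E : Set X) (hE : E = ⋂ m, K m)
    (nm : ℕ → ℕ) (hnm : StrictMono nm)
    (hsel : ∀ m, μ' (nm m) (K m) ≤ μ E + 2 * (μ (K m) - μ E) ∧
                 μ E ≤ μ' (nm m) (K m) + 2 * (μ (K m) - μ E)) :
    ∀ φ : X → ℝ, Continuous φ → HasCompactSupport φ →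
      Tendsto (fun m => ∫ x in K m, φ x ∂(μ' (nm m))) atTop (𝓝 (∫ x in E, φ x ∂μ)) := by
  haveI := hμfin
  intro φ hφc hφs
  -- a bound for φ
  obtain ⟨C₀, hC₀⟩ := hφs.exists_bound_of_continuous hφc
  set C : ℝ := max C₀ 0 with hCdef
  have hC : ∀ x, |φ x| ≤ C := fun x =>
    le_max_of_le_left (by simpa [Real.norm_eq_abs] using hC₀ x)
  have hC0 : (0:ℝ) ≤ C := le_max_right _ _
  -- basic measurability / finiteness facts
  have hKm : ∀ m, MeasurableSet (K m) := fun m => (hKcpt m).isClosed.measurableSet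
  have hEclosed : IsClosed E := hE ▸ isClosed_iInter fun m => (hKcpt m).isClosed
  have hEmeas : MeasurableSet E := hEclosed.measurableSet
  have hEK : ∀ m, E ⊆ K m := fun m => hE ▸ Set.iInter_subset K m
  have hμE_ne_top : μ E ≠ ∞ :=
    (lt_of_le_of_lt (measure_mono (hEK 0)) (hKcpt 0).measure_lt_top).ne
  -- μ (K m) → μ E
  have hμK : Tendsto (fun m => μ (K m)) atTop (𝓝 (μ E)) := by
    have := tendsto_measure_iInter_atTop (μ := μ)
      (fun m => (hKm m).nullMeasurableSet) hKanti ⟨0, (hKcpt 0).measure_lt_top.ne⟩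
    rwa [← hE] at this
  -- hence the defect tends to 0
  have hd : Tendsto (fun m => μ (K m) - μ E) atTop (𝓝 0) := by
    have := ENNReal.Tendsto.sub hμK (tendsto_const_nhds (x := μ E)) (Or.inr hμE_ne_top)
    simpa using this
  have h2d : Tendsto (fun m => 2 * (μ (K m) - μ E)) atTop (𝓝 0) := by
    have := ENNReal.Tendsto.const_mul (a := 2) hd (Or.inr (by norm_num))
    simpa using this
  -- μ' (nm m) (K m) → μ E, by squeezing
  have hμ'K : Tendsto (fun m => μ' (nm m) (K m)) atTop (𝓝 (μ E)) := by
    have hlow : Tendsto (fun m => μ E - 2 * (μ (K m) - μ E)) atTop (𝓝 (μ E)) := by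
      have := ENNReal.Tendsto.sub (tendsto_const_nhds (x := μ E)) h2d (Or.inl hμE_ne_top)
      simpa using this
    have hupp : Tendsto (fun m => μ E + 2 * (μ (K m) - μ E)) atTop (𝓝 (μ E)) := by
      have := Tendsto.add (tendsto_const_nhds (x := μ E)) h2d
      simpa using this
    exact tendsto_of_tendsto_of_tendsto_of_le_of_le hlow hupp
      (fun m => tsub_le_iff_right.mpr (hsel m).2) (fun m => (hsel m).1)
  have hμ'Kr : Tendsto (fun m => (μ' (nm m) (K m)).toReal) atTop (𝓝 (μ E).toReal) :=
    (ENNReal.tendsto_toReal hμE_ne_top).comp hμ'K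
  -- now the ε-argument
  rw [Metric.tendsto_nhds]
  intro ε hε
  set B : ℝ := C + 1 with hBdef
  have hB : (0:ℝ) < B := by positivity
  set δ : ℝ := ε / (4 * B) with hδdef
  have hδ : (0:ℝ) < δ := by positivity
  -- choose an open set U ⊇ E with μ U < μ E + δ
  haveI := hμouter
  obtain ⟨U, hUE, hUopen, hμU⟩ :=
    Set.exists_isOpen_lt_add E hμE_ne_top (ε := ENNReal.ofReal δ)
      (by simpa using ENNReal.ofReal_pos.mpr hδ |>.ne')
  have hμU_ne_top : μ U ≠ ∞ := by
    have h' : μ E + ENNReal.ofReal δ < ∞ := by finiteness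
    exact (hμU.trans h').ne
  -- choose m₁ with K m₁ ⊆ U
  obtain ⟨m₁, hKm₁U⟩ : ∃ m₁, K m₁ ⊆ U := by
    apply exists_subset_nhds_of_isCompact (hKanti.directed_ge) hKcpt
    intro x hx
    exact hUopen.mem_nhds (hUE (hE ▸ hx))
  -- Urysohn function: g = 1 on K m₁, g = 0 outside U, 0 ≤ g ≤ 1, compact support
  obtain ⟨g, hg1, hg0, hgc, hg01⟩ :=
    exists_continuous_one_zero_of_isCompact (hKcpt m₁) hUopen.isClosed_compl
      (Set.disjoint_compl_right_iff_subset.mpr hKm₁U)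
  have hgnn : ∀ x, 0 ≤ g x := fun x => (hg01 x).1
  have hgle1 : ∀ x, g x ≤ 1 := fun x => (hg01 x).2
  -- integrability
  have hφgc : Continuous fun x => φ x * g x := hφc.mul g.continuous
  have hφgs : HasCompactSupport fun x => φ x * g x := by
    simpa [Pi.mul_def] using hgc.mul_left (f := φ)
  have hgintμ : Integrable g μ := g.continuous.integrable_of_hasCompactSupport hgc
  have hφgintμ : Integrable (fun x => φ x * g x) μ :=
    hφgc.integrable_of_hasCompactSupport hφgs
  have hgint' : ∀ n, Integrable g (μ' n) := fun n => by
    haveI := hfin n; exact g.continuous.integrable_of_hasCompactSupport hgc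
  have hφgint' : ∀ n, Integrable (fun x => φ x * g x) (μ' n) := fun n => by
    haveI := hfin n; exact hφgc.integrable_of_hasCompactSupport hφgs
  -- ∫ g dμ ≤ (μ U).toReal
  have hgU : ∫ x, g x ∂μ ≤ (μ U).toReal := by
    have e1 : ∫ x in U, g x ∂μ = ∫ x, g x ∂μ :=
      setIntegral_eq_integral_of_forall_compl_eq_zero fun x hx => hg0 hx
    have e2 : ∫ x in U, g x ∂μ ≤ ∫ x in U, (1:ℝ) ∂μ := by
      refine setIntegral_mono_on hgintμ.integrableOn
        (integrableOn_const hμU_ne_top) hUopen.measurableSet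
        fun x _ => hgle1 x
    have e3 : ∫ x in U, (1:ℝ) ∂μ = (μ U).toReal := by simp; rfl
    rw [← e1]
    exact e2.trans (le_of_eq e3)
  -- L := ∫ g dμ − (μ E).toReal ≤ δ
  have hL : (∫ x, g x ∂μ) - (μ E).toReal ≤ δ := by
    have : (μ U).toReal ≤ (μ E).toReal + δ := by
      have h' : (μ U).toReal ≤ (μ E + ENNReal.ofReal δ).toReal :=
        ENNReal.toReal_mono (by finiteness) hμU.le
      rwa [ENNReal.toReal_add hμE_ne_top ENNReal.ofReal_ne_top,
        ENNReal.toReal_ofReal hδ.le] at h'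
    linarith
  -- vague convergence along the subsequence
  have hvg : Tendsto (fun m => ∫ x, g x ∂(μ' (nm m))) atTop (𝓝 (∫ x, g x ∂μ)) :=
    (hvague g g.continuous hgc).comp hnm.tendsto_atTop
  have hvφg : Tendsto (fun m => ∫ x, φ x * g x ∂(μ' (nm m))) atTop
      (𝓝 (∫ x, φ x * g x ∂μ)) :=
    (hvague _ hφgc hφgs).comp hnm.tendsto_atTop
  -- eventual bounds
  have hA : ∀ᶠ m in atTop,
      (∫ x, g x ∂(μ' (nm m))) - (μ' (nm m) (K m)).toReal
        < ((∫ x, g x ∂μ) - (μ E).toReal) + δ :=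
    (hvg.sub hμ'Kr).eventually (Filter.Tendsto.eventually_lt_const (by linarith) tendsto_id)
  have hB' : ∀ᶠ m in atTop,
      |(∫ x, φ x * g x ∂(μ' (nm m))) - ∫ x, φ x * g x ∂μ| < δ := by
    have := Metric.tendsto_nhds.1 hvφg δ hδ
    simpa [Real.dist_eq] using this
  filter_upwards [hA, hB', eventually_ge_atTop m₁] with m hAm hBm hm
  -- pointwise estimate for the m-th term
  haveI := hfin (nm m)
  have hgKm : ∀ x ∈ K m, g x = 1 := fun x hx => hg1 (hKanti hm hx)
  have hgE : ∀ x ∈ E, g x = 1 := fun x hx => hg1 (hEK m₁ hx)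
  have e1 := key_estimate (μ' (nm m)) (K m) (hKm m) φ g C hC hgnn
    (hφgint' (nm m)) (hgint' (nm m)) hgKm
  have e2 := key_estimate μ E hEmeas φ g C hC hgnn hφgintμ hgintμ hgE
  have e1' : |(∫ x, φ x * g x ∂(μ' (nm m))) - ∫ x in K m, φ x ∂(μ' (nm m))|
      ≤ C * (((∫ x, g x ∂μ) - (μ E).toReal) + δ) :=
    e1.trans (mul_le_mul_of_nonneg_left hAm.le hC0)
  have e2' : |(∫ x, φ x * g x ∂μ) - ∫ x in E, φ x ∂μ| ≤ C * δ :=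
    e2.trans (mul_le_mul_of_nonneg_left hL hC0)
  rw [Real.dist_eq]
  have tri : |(∫ x in K m, φ x ∂(μ' (nm m))) - ∫ x in E, φ x ∂μ|
      ≤ |(∫ x, φ x * g x ∂(μ' (nm m))) - ∫ x in K m, φ x ∂(μ' (nm m))|
        + |(∫ x, φ x * g x ∂(μ' (nm m))) - ∫ x, φ x * g x ∂μ|
        + |(∫ x, φ x * g x ∂μ) - ∫ x in E, φ x ∂μ| := by
    have habs4 : ∀ a b c d : ℝ, |a - d| ≤ |b - a| + |b - c| + |c - d| := by
      intro a b c d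
      calc |a - d| ≤ |a - b| + |b - d| := abs_sub_le a b d
        _ ≤ |a - b| + (|b - c| + |c - d|) := by linarith [abs_sub_le b c d]
        _ = |b - a| + |b - c| + |c - d| := by rw [abs_sub_comm]; ring
    exact habs4 _ _ _ _
  have hLδ : ((∫ x, g x ∂μ) - (μ E).toReal) + δ ≤ 2 * δ := by linarith
  have : |(∫ x in K m, φ x ∂(μ' (nm m))) - ∫ x in E, φ x ∂μ|
      ≤ C * (2 * δ) + δ + C * δ := by
    have := mul_le_mul_of_nonneg_left hLδ hC0
    linarith [tri, e1', e2', hBm.le]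
  have hfinal : C * (2 * δ) + δ + C * δ < ε := by
    have h4 : 4 * B * δ = ε := by
      rw [hδdef]; field_simp
    nlinarith [hδ, hC0, hB]
  linarith
end

section
/- For all real numbers a, b ∈ [0,1] and all complex numbers ξ, η with |ξ| = |η| = 1, Re ξ ≥ 0 and Re η ≥ 0, one has (a + b − a·b)² · |a·ξ − b·η|² ≥ |a·ξ + b·conj(η) − a·b·ξ·conj(η)|² · (a − b)². -/
set_option maxHeartbeats 1000000

private lemma lueck3_aux (a b x y : ℝ) (ha0 : 0 ≤ a) (ha1 : a ≤ 1) (hb0 : 0 ≤ b) (hb1 : b ≤ 1)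
    (hx0 : 0 ≤ x) (hx1 : x ≤ 1) (hy0 : 0 ≤ y) (hy1 : y ≤ 1) :
    0 ≤ (2-a)*(2-b)*(a^2+b^2) - a*b*(a-b)^2 + 2*(a-b)^2*(a*y+b*x)
      - 2*x*y*(2*(a^2+b^2)+a*b*(a*b-2*a-2*b)) - a*b*(2-a)*(2-b)*(2-x^2-y^2) := by
  have h1 : |a - b| ≤ 2 - a - b := abs_le.mpr ⟨by linarith, by linarith⟩
  have h2 : |x - y| ≤ 2 - x - y := abs_le.mpr ⟨by linarith, by linarith⟩
  have hc : (a - b) * (x - y) ≤ (2 - a - b) * (2 - x - y) := by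
    calc (a-b)*(x-y) ≤ |(a-b)*(x-y)| := le_abs_self _
    _ = |a-b| * |x-y| := abs_mul _ _
    _ ≤ (2-a-b)*(2-x-y) := mul_le_mul h1 h2 (abs_nonneg _) (by linarith [abs_nonneg (a-b)])
  have H2 : (a-b)^2 * ((a-b)*(x-y)) ≤ (a-b)^2 * ((2-a-b)*(2-x-y)) :=
    mul_le_mul_of_nonneg_left hc (sq_nonneg _)
  nlinarith [sq_nonneg ((x-y)*((a+b)*(4-a-b)+(a-b)^2)), H2,
    mul_nonneg (sq_nonneg (a-b)) (mul_nonneg (by linarith : (0:ℝ) ≤ x+y) (by linarith : (0:ℝ) ≤ 2-x-y))]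

/-- **Inequality (lueck3) from the proof of Lemma A.1 of the paper.**  For `a, b ∈ [0,1]`
and unimodular `ξ, η` with nonnegative real parts,
`(a + b − a·b)²·|a·ξ − b·η|² ≥ |a·ξ + b·conj η − a·b·ξ·conj η|²·(a − b)²`. -/
theorem lueck3_inequality
    (a b : ℝ) (ha : a ∈ Set.Icc (0 : ℝ) 1) (hb : b ∈ Set.Icc (0 : ℝ) 1)
    (ξ η : ℂ) (hξ : ‖ξ‖ = 1) (hη : ‖η‖ = 1)
    (hξre : 0 ≤ ξ.re) (hηre : 0 ≤ η.re) :
    ‖(a : ℂ) * ξ + (b : ℂ) * (starRingEnd ℂ) η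
          - (a : ℂ) * (b : ℂ) * ξ * (starRingEnd ℂ) η‖ ^ 2 * (a - b) ^ 2 ≤
      (a + b - a * b) ^ 2 * ‖(a : ℂ) * ξ - (b : ℂ) * η‖ ^ 2 := by
  obtain ⟨ha0, ha1⟩ := ha
  obtain ⟨hb0, hb1⟩ := hb
  have hxc : ξ.re ^ 2 + ξ.im ^ 2 = 1 := by
    have := Complex.sq_norm ξ
    rw [hξ] at this
    simpa [Complex.normSq_apply, sq] using this.symm
  have hyc : η.re ^ 2 + η.im ^ 2 = 1 := by
    have := Complex.sq_norm η
    rw [hη] at this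
    simpa [Complex.normSq_apply, sq] using this.symm
  set x := ξ.re with hxdef
  set X := ξ.im with hXdef
  set y := η.re with hydef
  set Y := η.im with hYdef
  have hx1 : x ≤ 1 := by nlinarith [sq_nonneg X]
  have hy1 : y ≤ 1 := by nlinarith [sq_nonneg Y]
  have hF := lueck3_aux a b x y ha0 ha1 hb0 hb1 hξre hx1 hηre hy1
  have habF : 0 ≤ a * b * ((2-a)*(2-b)*(a^2+b^2) - a*b*(a-b)^2 + 2*(a-b)^2*(a*y+b*x)
      - 2*x*y*(2*(a^2+b^2)+a*b*(a*b-2*a-2*b)) - a*b*(2-a)*(2-b)*(2-x^2-y^2)) :=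
    mul_nonneg (mul_nonneg ha0 hb0) hF
  have hcorr : 0 ≤ a^2*b^2*(2-a)*(2-b)*(X-Y)^2 :=
    mul_nonneg (mul_nonneg (mul_nonneg (mul_nonneg (sq_nonneg a) (sq_nonneg b))
      (by linarith : (0:ℝ) ≤ 2-a)) (by linarith : (0:ℝ) ≤ 2-b)) (sq_nonneg _)
  rw [Complex.sq_norm, Complex.sq_norm, Complex.normSq_apply, Complex.normSq_apply]
  simp only [Complex.add_re, Complex.sub_re, Complex.mul_re, Complex.mul_im,
    Complex.add_im, Complex.sub_im, Complex.ofReal_re, Complex.ofReal_im,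
    Complex.conj_re, Complex.conj_im, ← hxdef, ← hXdef, ← hydef, ← hYdef]
  have key : (a + b - a * b) ^ 2 * ((a*x - b*y)^2 + (a*X - b*Y)^2)
      - ((a*x + b*y - a*b*(x*y + X*Y))^2 + (a*X - b*Y - a*b*(X*y - x*Y))^2) * (a - b)^2
      = a * b * ((2-a)*(2-b)*(a^2+b^2) - a*b*(a-b)^2 + 2*(a-b)^2*(a*y+b*x)
        - 2*x*y*(2*(a^2+b^2)+a*b*(a*b-2*a-2*b)) - a*b*(2-a)*(2-b)*(2-x^2-y^2))
        + a^2*b^2*(2-a)*(2-b)*(X-Y)^2 := by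
    linear_combination ((-4)*a^2*b^2 + 2*a^2*b^3 + 2*a^2*b^3*y - a^2*b^4*Y^2 - a^2*b^4*y^2
      + 4*a^3*b - 4*a^3*b^2*y - a^3*b^3 + 2*a^3*b^3*Y^2 + 2*a^3*b^3*y^2
      - 2*a^4*b + 2*a^4*b*y + a^4*b^2 - a^4*b^2*Y^2 - a^4*b^2*y^2) * hxc
      + (4*a*b^3 - 2*a*b^4 + 2*a*b^4*x - 4*a^2*b^2 - 4*a^2*b^3*x
        + 2*a^3*b^2 + 2*a^3*b^2*x + a^3*b^3 - a^4*b^2) * hyc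
  linarith [key, habF, hcorr]
end
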